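/- Pasting preserves decreasingness of label quadruples: if the quadruples (τ, σ, σ', τ') and (υ, σ', σ'', υ') of label lists are decreasing, then the quadruple (τ ++ υ, σ, σ'', τ' ++ υ') is decreasing. -/

import Mathlib

open Relation

universe u v

variable {α : Type u} {β : Type v}

/-- down-set of a set of labels -/
def ds (r : β → β → Prop) (S : Set β) : Set β := {b | ∃ a ∈ S, r b a}

/-- down-set of a multiset of labels -/
def dm (r : β → β → Prop) (M : Multiset β) : Set β := ds r {a | a ∈ M}

/-- down-set of a list of labels -/
def dl (r : β → β → Prop) (σ : List β) : Set β := ds r {a | a ∈ σ}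

/-- `M -s S`: remove from the multiset `M` all occurrences of elements of the set `S` -/
noncomputable def msub (M : Multiset β) (S : Set β) : Multiset β :=
  @Multiset.filter β (fun a => a ∉ S) (Classical.decPred _) M

/-- `M ≼_mul N` -/
def mulLe (r : β → β → Prop) (M N : Multiset β) : Prop :=
  ∃ I J K : Multiset β, M = I + K ∧ N = I + J ∧ ∀ k ∈ K, k ∈ dm r J

/-- `M ≺_mul N`: the multiset extension of `r` -/
def mulLt (r : β → β → Prop) (M N : Multiset β) : Prop :=
  ∃ I J K : Multiset β, M = I + K ∧ N = I + J ∧ (∀ k ∈ K, k ∈ dm r J) ∧ J ≠ 0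

/-- the one-step multiset extension of `r` -/
def mult1 (r : β → β → Prop) (M N : Multiset β) : Prop :=
  ∃ (a : β) (I K : Multiset β), M = I + K ∧ N = I + {a} ∧ ∀ b ∈ K, r b a

/-- the lexicographic maximum measure `|σ|` -/
noncomputable def lexmax (r : β → β → Prop) : List β → Multiset β
  | [] => 0
  | a :: σ => {a} + msub (lexmax r σ) (ds r {a})

/-- the quadruple of label lists `(τ, σ, σ', τ')` is decreasing -/
def Decreasing (r : β → β → Prop) (τ σ σ' τ' : List β) : Prop :=
  mulLe r (lexmax r (σ ++ τ')) (lexmax r τ + lexmax r σ) ∧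
  mulLe r (lexmax r (τ ++ σ')) (lexmax r τ + lexmax r σ)

/-- labeled rewrite sequences of the labeled ARS `B` -/
inductive LSeq (B : α → β → α → Prop) : α → List β → α → Prop
  | nil (a : α) : LSeq B a [] a
  | cons {a b c : α} {l : β} {σ : List β} :
      B a l b → LSeq B b σ c → LSeq B a (l :: σ) c

/-- labeled conversions of the labeled ARS `B` -/
inductive Conv (B : α → β → α → Prop) : α → List β → α → Prop
  | nil (a : α) : Conv B a [] a
  | fwd {a b c : α} {l : β} {σ : List β} :
      B a l b → Conv B b σ c → Conv B a (l :: σ) c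
  | bwd {a b c : α} {l : β} {σ : List β} :
      B b l a → Conv B b σ c → Conv B a (l :: σ) c

/-- the local peak `b ←lb a →lc c` is decreasing with respect to conversions -/
def LDConv (B : α → β → α → Prop) (r : β → β → Prop) (b c : α) (lb lc : β) : Prop :=
  ∃ (d b1 b2 c1 c2 : α) (σ1 σ3 τ1 τ3 : List β),
    Conv B b σ1 b1 ∧ (∀ l ∈ σ1, l ∈ ds r ({lc} : Set β)) ∧
    (b1 = b2 ∨ B b1 lb b2) ∧
    Conv B b2 σ3 d ∧ (∀ l ∈ σ3, l ∈ ds r ({lc, lb} : Set β)) ∧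
    Conv B c τ1 c1 ∧ (∀ l ∈ τ1, l ∈ ds r ({lb} : Set β)) ∧
    (c1 = c2 ∨ B c1 lc c2) ∧
    Conv B c2 τ3 d ∧ (∀ l ∈ τ3, l ∈ ds r ({lc, lb} : Set β))

/-- confluence of an abstract rewrite system -/
def Confluent (A : α → α → Prop) : Prop :=
  ∀ a b c : α, ReflTransGen A a b → ReflTransGen A a c →
    ∃ d, ReflTransGen A b d ∧ ReflTransGen A c d

section Aux

variable {β : Type v} {r : β → β → Prop}

open Classical in
lemma count_msub [DecidableEq β] (M : Multiset β) (S : Set β) (a : β) :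
    Multiset.count a (msub M S) = if a ∈ S then 0 else Multiset.count a M := by
  unfold msub
  rw [@Multiset.count_filter β _ (fun a => a ∉ S) (Classical.decPred _) a M]
  by_cases h : a ∈ S <;> simp [h]

lemma mem_msub {M : Multiset β} {S : Set β} {a : β} : a ∈ msub M S ↔ a ∈ M ∧ a ∉ S := by
  unfold msub
  exact @Multiset.mem_filter β (fun a => a ∉ S) (Classical.decPred _) a M

lemma msub_add (M N : Multiset β) (S : Set β) : msub (M + N) S = msub M S + msub N S := by
  classical
  ext a
  simp only [count_msub, Multiset.count_add]
  split_ifs <;> omega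

lemma msub_le (M : Multiset β) (S : Set β) : msub M S ≤ M := by
  classical
  refine Multiset.le_iff_count.2 fun a => ?_
  rw [count_msub]
  split_ifs <;> omega

lemma msub_msub (M : Multiset β) (S T : Set β) :
    msub (msub M S) T = msub M (S ∪ T) := by
  classical
  ext a
  simp only [count_msub, Set.mem_union]
  by_cases hS : a ∈ S <;> by_cases hT : a ∈ T <;> simp [hS, hT]

lemma msub_empty (M : Multiset β) : msub M (∅ : Set β) = M := by
  classical
  ext a
  simp [count_msub]

lemma msub_subset_le {M : Multiset β} {S T : Set β} (h : S ⊆ T) : msub M T ≤ msub M S := by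
  classical
  refine Multiset.le_iff_count.2 fun a => ?_
  rw [count_msub, count_msub]
  by_cases hT : a ∈ T
  · simp [hT]
  · have hS : a ∉ S := fun hs => hT (h hs)
    simp [hT, hS]

lemma msub_compl_add (M : Multiset β) (S : Set β) : msub M S + msub M Sᶜ = M := by
  classical
  ext a
  simp only [Multiset.count_add, count_msub, Set.mem_compl_iff]
  by_cases hS : a ∈ S <;> simp [hS]

lemma mem_dm {M : Multiset β} {b : β} : b ∈ dm r M ↔ ∃ a ∈ M, r b a := Iff.rfl

lemma mem_dl {σ : List β} {b : β} : b ∈ dl r σ ↔ ∃ a ∈ σ, r b a := Iff.rfl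

lemma dl_nil : dl r [] = (∅ : Set β) := by
  ext b; simp [mem_dl]

lemma dl_append (σ τ : List β) : dl r (σ ++ τ) = dl r σ ∪ dl r τ := by
  ext b
  simp only [mem_dl, Set.mem_union, List.mem_append]
  constructor
  · rintro ⟨a, ha | ha, hr⟩
    · exact Or.inl ⟨a, ha, hr⟩
    · exact Or.inr ⟨a, ha, hr⟩
  · rintro (⟨a, ha, hr⟩ | ⟨a, ha, hr⟩)
    · exact ⟨a, Or.inl ha, hr⟩
    · exact ⟨a, Or.inr ha, hr⟩

lemma dl_cons (a : β) (σ : List β) : dl r (a :: σ) = ds r {a} ∪ dl r σ := by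
  ext b
  simp only [mem_dl, Set.mem_union, List.mem_cons, ds, Set.mem_setOf_eq, Set.mem_singleton_iff]
  constructor
  · rintro ⟨c, hc | hc, hr⟩
    · exact Or.inl ⟨c, hc, hr⟩
    · exact Or.inr ⟨c, hc, hr⟩
  · rintro (⟨c, hc, hr⟩ | ⟨c, hc, hr⟩)
    · exact ⟨c, Or.inl hc, hr⟩
    · exact ⟨c, Or.inr hc, hr⟩

/-- down-sets are downward closed when `r` is transitive -/
lemma ds_closed (htrans : Transitive r) {S : Set β} {a b : β}
    (ha : a ∈ ds r S) (hr : r b a) : b ∈ ds r S := by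
  obtain ⟨c, hc, hac⟩ := ha
  exact ⟨c, hc, htrans hr hac⟩

lemma mulLe_refl (M : Multiset β) : mulLe r M M :=
  ⟨M, 0, 0, (add_zero M).symm, (add_zero M).symm, by simp⟩

lemma mulLe_of_le {M N : Multiset β} (h : M ≤ N) : mulLe r M N := by
  classical
  exact ⟨M, N - M, 0, (add_zero M).symm, (add_tsub_cancel_of_le h).symm, by simp⟩

lemma mulLe_add {M N M' N' : Multiset β} (h : mulLe r M N) (h' : mulLe r M' N') :
    mulLe r (M + M') (N + N') := by
  obtain ⟨I, J, K, e1, e2, hK⟩ := h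
  obtain ⟨I', J', K', e1', e2', hK'⟩ := h'
  refine ⟨I + I', J + J', K + K', by rw [e1, e1']; abel, by rw [e2, e2']; abel, ?_⟩
  intro k hk
  rcases Multiset.mem_add.1 hk with hk | hk
  · obtain ⟨j, hj, hr⟩ := hK k hk
    exact ⟨j, Multiset.mem_add.2 (Or.inl hj), hr⟩
  · obtain ⟨j, hj, hr⟩ := hK' k hk
    exact ⟨j, Multiset.mem_add.2 (Or.inr hj), hr⟩

lemma mulLe_trans (htrans : Transitive r) {M N P : Multiset β}
    (h1 : mulLe r M N) (h2 : mulLe r N P) : mulLe r M P := by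
  classical
  obtain ⟨I₁, J₁, K₁, e1, e2, hK₁⟩ := h1
  obtain ⟨I₂, J₂, K₂, e3, e4, hK₂⟩ := h2
  have hA : I₁ - I₂ ≤ K₂ := by
    rw [Multiset.sub_le_iff_le_add]
    calc I₁ ≤ I₁ + J₁ := self_le_add_right _ _
    _ = I₂ + K₂ := e2.symm.trans e3
    _ = K₂ + I₂ := add_comm _ _
  refine ⟨I₁ ∩ I₂, (I₂ - I₁) + J₂, (I₁ - I₂) + K₁, ?_, ?_, ?_⟩
  · rw [e1]
    have h : I₁ ∩ I₂ + (I₁ - I₂) = I₁ := by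
      ext a
      simp only [Multiset.count_add, Multiset.count_inter, Multiset.count_sub]
      omega
    rw [← add_assoc, h]
  · rw [e4]
    have h : I₁ ∩ I₂ + (I₂ - I₁) = I₂ := by
      ext a
      simp only [Multiset.count_add, Multiset.count_inter, Multiset.count_sub]
      omega
    rw [← add_assoc, h]
  · intro k hk
    rcases Multiset.mem_add.1 hk with hk | hk
    · have hk2 : k ∈ K₂ := Multiset.mem_of_le hA hk
      obtain ⟨j, hj, hr⟩ := hK₂ k hk2
      exact ⟨j, Multiset.mem_add.2 (Or.inr hj), hr⟩
    · obtain ⟨j₁, hj₁, hr₁⟩ := hK₁ k hk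
      by_cases hj : j₁ ∈ K₂
      · obtain ⟨j₂, hj₂, hr₂⟩ := hK₂ j₁ hj
        exact ⟨j₂, Multiset.mem_add.2 (Or.inr hj₂), htrans hr₁ hr₂⟩
      · have hc : j₁ ∈ I₂ - I₁ := by
          have hK₂0 : Multiset.count j₁ K₂ = 0 := Multiset.count_eq_zero.2 hj
          have hN : Multiset.count j₁ (I₁ + J₁) = Multiset.count j₁ (I₂ + K₂) := by
            rw [← e2, ← e3]
          have hJ₁1 : 1 ≤ Multiset.count j₁ J₁ := Multiset.one_le_count_iff_mem.2 hj₁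
          rw [Multiset.count_add, Multiset.count_add] at hN
          rw [← Multiset.one_le_count_iff_mem, Multiset.count_sub]
          omega
        exact ⟨j₁, Multiset.mem_add.2 (Or.inl hc), hr₁⟩

lemma mulLe_cancel_single (htrans : Transitive r) (hirrefl : Irreflexive r) (a : β)
    {P Q : Multiset β} (h : mulLe r (a ::ₘ P) (a ::ₘ Q)) : mulLe r P Q := by
  classical
  obtain ⟨X, J, K, e1, e2, hK⟩ := h
  by_cases hX : a ∈ X
  · refine ⟨X.erase a, J, K, ?_, ?_, hK⟩
    · have h' := congrArg (Multiset.erase · a) e1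
      simpa [Multiset.erase_add_left_pos _ hX] using h'
    · have h' := congrArg (Multiset.erase · a) e2
      simpa [Multiset.erase_add_left_pos _ hX] using h'
  · have haK : a ∈ K := by
      have h' : a ∈ X + K := e1 ▸ Multiset.mem_cons_self a P
      rcases Multiset.mem_add.1 h' with h'' | h''
      · exact absurd h'' hX
      · exact h''
    have haJ : a ∈ J := by
      have h' : a ∈ X + J := e2 ▸ Multiset.mem_cons_self a Q
      rcases Multiset.mem_add.1 h' with h'' | h''
      · exact absurd h'' hX
      · exact h''
    obtain ⟨j', hj'J, hraj'⟩ := hK a haK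
    have hj'ne : j' ≠ a := fun hh => hirrefl a (hh ▸ hraj')
    refine ⟨X, J.erase a, K.erase a, ?_, ?_, ?_⟩
    · have h' := congrArg (Multiset.erase · a) e1
      simpa [Multiset.erase_add_right_pos _ haK] using h'
    · have h' := congrArg (Multiset.erase · a) e2
      simpa [Multiset.erase_add_right_pos _ haJ] using h'
    · intro k hk
      obtain ⟨j, hjJ, hr⟩ := hK k (Multiset.mem_of_mem_erase hk)
      by_cases hja : j = a
      · exact ⟨j', (Multiset.mem_erase_of_ne hj'ne).2 hj'J, htrans (hja ▸ hr) hraj'⟩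
      · exact ⟨j, (Multiset.mem_erase_of_ne hja).2 hjJ, hr⟩

lemma mulLe_cancel (htrans : Transitive r) (hirrefl : Irreflexive r) (I : Multiset β)
    {M N : Multiset β} (h : mulLe r (I + M) (I + N)) : mulLe r M N := by
  induction I using Multiset.induction_on generalizing M N with
  | empty => simpa using h
  | cons a I ih =>
    apply ih
    apply mulLe_cancel_single htrans hirrefl a
    simpa [Multiset.cons_add] using h

lemma mulLe_add_extra {M N X : Multiset β} (h : mulLe r M N)
    (hX : ∀ x ∈ X, ∃ t, t ∈ N ∧ t ∉ M ∧ r x t) : mulLe r (M + X) N := by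
  obtain ⟨I, J, K, e1, e2, hK⟩ := h
  refine ⟨I, J, K + X, by rw [e1]; abel, e2, ?_⟩
  intro k hk
  rcases Multiset.mem_add.1 hk with hk | hk
  · exact hK k hk
  · obtain ⟨t, htN, htM, hr⟩ := hX k hk
    have ht' : t ∈ I + J := e2 ▸ htN
    rcases Multiset.mem_add.1 ht' with h' | h'
    · exact absurd (e1 ▸ Multiset.mem_add.2 (Or.inl h') : t ∈ M) htM
    · exact ⟨t, h', hr⟩

lemma mulLe_msub {M N : Multiset β} {S : Set β}
    (hS : ∀ a b, a ∈ S → r b a → b ∈ S) (h : mulLe r M N) :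
    mulLe r (msub M S) (msub N S) := by
  obtain ⟨I, J, K, e1, e2, hK⟩ := h
  refine ⟨msub I S, msub J S, msub K S, by rw [e1, msub_add], by rw [e2, msub_add], ?_⟩
  intro k hk
  obtain ⟨hkK, hkS⟩ := mem_msub.1 hk
  obtain ⟨j, hjJ, hr⟩ := hK k hkK
  exact ⟨j, mem_msub.2 ⟨hjJ, fun hjS => hkS (hS j k hjS hr)⟩, hr⟩

lemma mulLe_dm_subset (htrans : Transitive r) {M N : Multiset β} (h : mulLe r M N) :
    dm r M ⊆ dm r N := by
  obtain ⟨I, J, K, e1, e2, hK⟩ := h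
  rintro b ⟨m, hm, hr⟩
  rcases Multiset.mem_add.1 (e1 ▸ hm : m ∈ I + K) with h' | h'
  · exact ⟨m, e2 ▸ Multiset.mem_add.2 (Or.inl h'), hr⟩
  · obtain ⟨j, hj, hrj⟩ := hK m h'
    exact ⟨j, e2 ▸ Multiset.mem_add.2 (Or.inr hj), htrans hr hrj⟩

lemma lexmax_nil : lexmax r [] = 0 := rfl

lemma lexmax_cons (a : β) (σ : List β) :
    lexmax r (a :: σ) = {a} + msub (lexmax r σ) (ds r {a}) := rfl

lemma mem_of_mem_lexmax {a : β} {σ : List β} (h : a ∈ lexmax r σ) : a ∈ σ := by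
  induction σ with
  | nil => simp [lexmax_nil] at h
  | cons b σ ih =>
    rw [lexmax_cons] at h
    rcases Multiset.mem_add.1 h with h' | h'
    · simp only [Multiset.mem_singleton] at h'
      exact h' ▸ (List.mem_cons_self : b ∈ b :: σ)
    · exact List.mem_cons_of_mem b (ih (mem_msub.1 h').1)

lemma lexmax_append (σ τ : List β) :
    lexmax r (σ ++ τ) = lexmax r σ + msub (lexmax r τ) (dl r σ) := by
  induction σ with
  | nil => simp [lexmax_nil, dl_nil, msub_empty]
  | cons a σ ih =>
    rw [List.cons_append, lexmax_cons, ih, msub_add, msub_msub, lexmax_cons, dl_cons,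
      Set.union_comm (dl r σ) (ds r {a}), add_assoc]

lemma mem_lexmax_or (htrans : Transitive r) {σ : List β} :
    ∀ a ∈ σ, a ∈ lexmax r σ ∨ a ∈ dm r (lexmax r σ) := by
  induction σ with
  | nil => simp
  | cons b σ ih =>
    intro a ha
    have memb : b ∈ lexmax r (b :: σ) := by
      rw [lexmax_cons]; exact Multiset.mem_add.2 (Or.inl (Multiset.mem_singleton_self b))
    rcases List.mem_cons.1 ha with rfl | ha
    · exact Or.inl memb
    · rcases ih a ha with h' | h'
      · by_cases hd : a ∈ ds r {b}
        · obtain ⟨c, hc, hr⟩ := hd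
          rw [Set.mem_singleton_iff] at hc
          exact Or.inr ⟨b, memb, hc ▸ hr⟩
        · refine Or.inl ?_
          rw [lexmax_cons]
          exact Multiset.mem_add.2 (Or.inr (mem_msub.2 ⟨h', hd⟩))
      · obtain ⟨c, hc, hr⟩ := h'
        by_cases hd : c ∈ ds r {b}
        · obtain ⟨e, he, hre⟩ := hd
          rw [Set.mem_singleton_iff] at he
          exact Or.inr ⟨b, memb, he ▸ htrans hr hre⟩
        · refine Or.inr ⟨c, ?_, hr⟩
          rw [lexmax_cons]
          exact Multiset.mem_add.2 (Or.inr (mem_msub.2 ⟨hc, hd⟩))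

lemma dl_eq_dm_lexmax (htrans : Transitive r) (σ : List β) :
    dl r σ = dm r (lexmax r σ) := by
  ext b
  constructor
  · rintro ⟨a, ha, hr⟩
    rcases mem_lexmax_or htrans a ha with h' | h'
    · exact ⟨a, h', hr⟩
    · obtain ⟨c, hc, hrc⟩ := h'
      exact ⟨c, hc, htrans hr hrc⟩
  · rintro ⟨a, ha, hr⟩
    exact ⟨a, mem_of_mem_lexmax ha, hr⟩

lemma dm_add (M N : Multiset β) : dm r (M + N) = dm r M ∪ dm r N := by
  ext b
  simp only [mem_dm, Set.mem_union, Multiset.mem_add]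
  constructor
  · rintro ⟨a, ha | ha, hr⟩
    · exact Or.inl ⟨a, ha, hr⟩
    · exact Or.inr ⟨a, ha, hr⟩
  · rintro (⟨a, ha, hr⟩ | ⟨a, ha, hr⟩)
    · exact ⟨a, Or.inl ha, hr⟩
    · exact ⟨a, Or.inr ha, hr⟩

end Aux

/-- pasting preserves decreasingness -/
theorem pasting_preserves_decreasingness {β : Type v} (r : β → β → Prop)
    (htrans : Transitive r) (hirrefl : Irreflexive r)
    (τ σ σ' τ' υ σ'' υ' : List β)
    (h1 : Decreasing r τ σ σ' τ') (h2 : Decreasing r υ σ' σ'' υ') :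
    Decreasing r (τ ++ υ) σ σ'' (τ' ++ υ') := by
  obtain ⟨h11, h12⟩ := h1
  obtain ⟨h21, h22⟩ := h2
  have hdcτ : ∀ a b, a ∈ dl r τ → r b a → b ∈ dl r τ :=
    fun a b ha hr => ds_closed htrans ha hr
  -- cancellation consequences
  have c1 : mulLe r (msub (lexmax r υ') (dl r σ')) (lexmax r υ) := by
    apply mulLe_cancel htrans hirrefl (lexmax r σ')
    rw [lexmax_append] at h21
    rwa [add_comm (lexmax r υ) (lexmax r σ')] at h21
  have c2 : mulLe r (msub (lexmax r σ'') (dl r υ)) (lexmax r σ') := by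
    apply mulLe_cancel htrans hirrefl (lexmax r υ)
    rw [lexmax_append] at h22
    exact h22
  have c3 : mulLe r (msub (lexmax r σ') (dl r τ)) (lexmax r σ) := by
    apply mulLe_cancel htrans hirrefl (lexmax r τ)
    rw [lexmax_append] at h12
    exact h12
  have hσ'sub : dl r σ' ⊆ dl r τ ∪ dl r σ := by
    intro x hx
    have hx1 : x ∈ dl r (τ ++ σ') := by
      rw [dl_append]; exact Set.mem_union_right _ hx
    rw [dl_eq_dm_lexmax htrans] at hx1
    have hx2 := mulLe_dm_subset htrans h12 hx1
    rw [dm_add, ← dl_eq_dm_lexmax htrans, ← dl_eq_dm_lexmax htrans] at hx2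
    exact hx2
  constructor
  · -- first component
    set X : Multiset β := msub (lexmax r υ') (dl r σ ∪ dl r τ') with hX
    set X₁ : Multiset β := msub X (dl r τ) with hX₁
    set X₂ : Multiset β := msub X (dl r τ)ᶜ with hX₂
    have step2 : mulLe r (lexmax r (σ ++ τ') + X₂) (lexmax r τ + lexmax r σ) := by
      refine mulLe_add_extra h11 ?_
      intro x hx
      obtain ⟨hxX, hxc⟩ := mem_msub.1 hx
      have hxτ : x ∈ dl r τ := by
        by_contra hc
        exact hxc hc
      obtain ⟨hxυ', hxU⟩ := mem_msub.1 hxX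
      rw [dl_eq_dm_lexmax htrans] at hxτ
      obtain ⟨t, htτ, hrt⟩ := hxτ
      refine ⟨t, Multiset.mem_add.2 (Or.inl htτ), ?_, hrt⟩
      intro htA
      have ht' := mem_of_mem_lexmax htA
      rcases List.mem_append.1 ht' with h' | h'
      · exact hxU (Set.mem_union_left _ ⟨t, h', hrt⟩)
      · exact hxU (Set.mem_union_right _ ⟨t, h', hrt⟩)
    have stepX1 : mulLe r X₁ (msub (lexmax r υ) (dl r τ)) := by
      have sub : X₁ ≤ msub (lexmax r υ') (dl r σ' ∪ dl r τ) := by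
        rw [hX₁, hX, msub_msub]
        refine msub_subset_le ?_
        rintro x (hx | hx)
        · rcases hσ'sub hx with h' | h'
          · exact Set.mem_union_right _ h'
          · exact Set.mem_union_left _ (Set.mem_union_left _ h')
        · exact Set.mem_union_right _ hx
      have c1' : mulLe r (msub (lexmax r υ') (dl r σ' ∪ dl r τ))
          (msub (lexmax r υ) (dl r τ)) := by
        have h' := mulLe_msub hdcτ c1
        rwa [msub_msub] at h'
      exact mulLe_trans htrans (mulLe_of_le sub) c1'
    have combine := mulLe_add step2 stepX1
    have eL : lexmax r (σ ++ (τ' ++ υ')) = lexmax r (σ ++ τ') + X₂ + X₁ := by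
      have split : X = X₁ + X₂ := (msub_compl_add X (dl r τ)).symm
      rw [← List.append_assoc, lexmax_append, dl_append, ← hX, split]
      abel
    have eR : lexmax r (τ ++ υ) + lexmax r σ =
        lexmax r τ + lexmax r σ + msub (lexmax r υ) (dl r τ) := by
      rw [lexmax_append]; abel
    show mulLe r (lexmax r (σ ++ (τ' ++ υ'))) (lexmax r (τ ++ υ) + lexmax r σ)
    rw [eL, eR]
    exact combine
  · -- second component
    have c2' : mulLe r (msub (lexmax r σ'') (dl r υ ∪ dl r τ))
        (msub (lexmax r σ') (dl r τ)) := by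
      have h' := mulLe_msub hdcτ c2
      rwa [msub_msub] at h'
    have cB : mulLe r (msub (lexmax r σ'') (dl r υ ∪ dl r τ)) (lexmax r σ) :=
      mulLe_trans htrans c2' c3
    show mulLe r (lexmax r ((τ ++ υ) ++ σ'')) (lexmax r (τ ++ υ) + lexmax r σ)
    rw [lexmax_append (τ ++ υ) σ'', dl_append, Set.union_comm (dl r τ) (dl r υ)]
    exact mulLe_add (mulLe_refl _) cB
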